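/- Let k be a commutative unital ring, A an associative unital k-algebra, and Y ⊆ A a subset generating A as a k-algebra. For every d ∈ ℕ, the two-sided ideal of A generated by all products (y_1 − 1)(y_2 − 1)⋯(y_d − 1) with y_1,…,y_d ∈ Y equals the k-linear span of all products (y_1 − 1)(y_2 − 1)⋯(y_r − 1) with r ≥ d and y_1,…,y_r ∈ Y. -/

import Mathlib

/-- If `Y` generates `A` as a `k`-algebra, then for every `d ∈ ℕ` the
two-sided ideal generated by the length-`d` products `(y₁ - 1)⋯(y_d - 1)` with `y_i ∈ Y`
equals the `k`-linear span of all products `(y₁ - 1)⋯(y_r - 1)` with `r ≥ d`, `y_i ∈ Y`. -/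
theorem stmt_8 {k A : Type*} [CommRing k] [Ring A] [Algebra k A]
    (Y : Set A) (hY : Algebra.adjoin k Y = ⊤) (d : ℕ) :
    Submodule.span k {x : A | ∃ a b : A, ∃ y : Fin d → A,
        (∀ i, y i ∈ Y) ∧ x = a * (List.ofFn fun i => y i - 1).prod * b}
      = Submodule.span k {x : A | ∃ r : ℕ, d ≤ r ∧ ∃ y : Fin r → A,
        (∀ i, y i ∈ Y) ∧ x = (List.ofFn fun i => y i - 1).prod} := by
  set G : Set A := {x : A | ∃ r : ℕ, d ≤ r ∧ ∃ y : Fin r → A,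
        (∀ i, y i ∈ Y) ∧ x = (List.ofFn fun i => y i - 1).prod} with hG
  set M := Submodule.span k G with hM
  -- closure of M under left multiplication by elements of Y
  have hleft : ∀ y ∈ Y, ∀ m ∈ M, y * m ∈ M := by
    intro y hy m hm
    induction hm using Submodule.span_induction with
    | mem x hx =>
      obtain ⟨r, hr, f, hf, rfl⟩ := hx
      have h1 : (y - 1) * (List.ofFn fun i => f i - 1).prod ∈ G := by
        refine ⟨r + 1, le_trans hr (Nat.le_succ r), Fin.cons y f, ?_, ?_⟩
        · intro i
          refine Fin.cases ?_ ?_ i <;> simp [hy, hf]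
        · rw [List.ofFn_succ]; simp
      have heq : y * (List.ofFn fun i => f i - 1).prod
          = (y - 1) * (List.ofFn fun i => f i - 1).prod
            + (List.ofFn fun i => f i - 1).prod := by rw [sub_mul, one_mul, sub_add_cancel]
      rw [heq]
      exact add_mem (Submodule.subset_span h1)
        (Submodule.subset_span ⟨r, hr, f, hf, rfl⟩)
    | zero => simpa using zero_mem M
    | add a b _ _ ha hb => rw [mul_add]; exact add_mem ha hb
    | smul c a _ ha => rw [mul_smul_comm]; exact Submodule.smul_mem M c ha
  have hright : ∀ y ∈ Y, ∀ m ∈ M, m * y ∈ M := by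
    intro y hy m hm
    induction hm using Submodule.span_induction with
    | mem x hx =>
      obtain ⟨r, hr, f, hf, rfl⟩ := hx
      have h1 : (List.ofFn fun i => f i - 1).prod * (y - 1) ∈ G := by
        refine ⟨r + 1, le_trans hr (Nat.le_succ r), Fin.snoc f y, ?_, ?_⟩
        · intro i
          refine Fin.lastCases ?_ ?_ i <;> simp [hy, hf]
        · rw [List.ofFn_succ']
          simp [List.concat_eq_append, Fin.snoc_castSucc]
      have heq : (List.ofFn fun i => f i - 1).prod * y
          = (List.ofFn fun i => f i - 1).prod * (y - 1)
            + (List.ofFn fun i => f i - 1).prod := by rw [mul_sub, mul_one, sub_add_cancel]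
      rw [heq]
      exact add_mem (Submodule.subset_span h1)
        (Submodule.subset_span ⟨r, hr, f, hf, rfl⟩)
    | zero => simpa using zero_mem M
    | add a b _ _ ha hb => rw [add_mul]; exact add_mem ha hb
    | smul c a _ ha => rw [smul_mul_assoc]; exact Submodule.smul_mem M c ha
  -- closure of M under multiplication by arbitrary elements of A
  have key : ∀ a : A, ∀ m ∈ M, a * m ∈ M ∧ m * a ∈ M := by
    intro a
    have ha : a ∈ Algebra.adjoin k Y := hY ▸ Algebra.mem_top
    induction ha using Algebra.adjoin_induction with
    | mem y hy => exact fun m hm => ⟨hleft y hy m hm, hright y hy m hm⟩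
    | algebraMap r =>
      intro m hm
      rw [← Algebra.commutes r m, Algebra.smul_def r m |>.symm]
      exact ⟨Submodule.smul_mem M r hm, Submodule.smul_mem M r hm⟩
    | add x y _ _ hx hy =>
      intro m hm
      rw [add_mul, mul_add]
      exact ⟨add_mem (hx m hm).1 (hy m hm).1, add_mem (hx m hm).2 (hy m hm).2⟩
    | mul x y _ _ hx hy =>
      intro m hm
      rw [mul_assoc, ← mul_assoc m]
      exact ⟨(hx _ (hy m hm).1).1, (hy _ (hx m hm).2).2⟩
  apply le_antisymm
  · rw [Submodule.span_le]
    rintro x ⟨a, b, f, hf, rfl⟩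
    have hP : (List.ofFn fun i => f i - 1).prod ∈ M :=
      Submodule.subset_span ⟨d, le_refl d, f, hf, rfl⟩
    have h1 := (key b _ hP).2
    rw [mul_assoc]
    exact (key a _ h1).1
  · rw [Submodule.span_le]
    rintro x ⟨r, hr, f, hf, rfl⟩
    obtain ⟨m, rfl⟩ : ∃ m, r = d + m := ⟨r - d, by omega⟩
    apply Submodule.subset_span
    refine ⟨1, (List.ofFn fun j : Fin m => f (Fin.natAdd d j) - 1).prod,
      fun i => f (Fin.castAdd m i), fun i => hf _, ?_⟩
    rw [one_mul]
    rw [show (fun i : Fin (d + m) => f i - 1) = fun i => (fun i => f i - 1) i from rfl]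
    rw [List.ofFn_add (f := fun i : Fin (d + m) => f i - 1), List.prod_append]
    rfl
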